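/- Let δ, γ ∈ (−1, +∞) and let h₁, h₂ : [0,∞) → ℝ be continuous with 0 ≤ hᵢ(x) ≤ 1 for all x ≥ 0 (i = 1, 2). Then for every x ≥ 0, |T(h₁)(x) − T(h₂)(x)| ≤ M₂(δ,γ)·(|F(x; h₁) − F(x; h₂)| + |F(+∞; h₁) − F(+∞; h₂)|), where M₂(δ,γ) := 2·max(1,1+δ)·max(1,1+γ)^{1/2} / (√π·min(1,1+δ)^{1/2}). -/

import Mathlib

open Real Filter Set MeasureTheory intervalIntegral

/-- `F(x; h)` from the paper. -/
noncomputable def Fint (δ γ : ℝ) (h : ℝ → ℝ) (x : ℝ) : ℝ :=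
  ∫ w in (0:ℝ)..x,
    Real.exp (-(∫ z in (0:ℝ)..w, 2*z*(1+γ*h z)/(1+δ*h z))) * (1/(1+δ*h w))

/-- The constant `M₂(δ,γ)` from the paper. -/
noncomputable def M2 (δ γ : ℝ) : ℝ :=
  2 * (max 1 (1+δ)) * (max 1 (1+γ)) ^ ((1:ℝ)/2) /
    (Real.sqrt π * (min 1 (1+δ)) ^ ((1:ℝ)/2))

lemma Fint_props (δ γ : ℝ) (hδ : -1 < δ) (hγ : -1 < γ) (h : ℝ → ℝ)
    (hcont : ContinuousOn h (Set.Ici 0)) (hb : ∀ x ≥ (0:ℝ), 0 ≤ h x ∧ h x ≤ 1)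
    (L : ℝ) (hL : Tendsto (Fint δ γ h) atTop (nhds L)) :
    (∀ x ≥ (0:ℝ), 0 ≤ Fint δ γ h x ∧ Fint δ γ h x ≤ L) ∧ (M2 δ γ)⁻¹ ≤ L := by
  set m : ℝ := min 1 (1+δ) with hm_def
  set A : ℝ := max 1 (1+δ) with hA_def
  set B : ℝ := max 1 (1+γ) with hB_def
  have hm : 0 < m := lt_min one_pos (by linarith)
  have hA : 0 < A := lt_of_lt_of_le one_pos (le_max_left _ _)
  have hB : 0 < B := lt_of_lt_of_le one_pos (le_max_left _ _)
  set c : ℝ := B / m with hc_def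
  have hc : 0 < c := div_pos hB hm
  -- denominator bounds
  have hden_lb : ∀ w ∈ Ici (0:ℝ), m ≤ 1 + δ * h w := by
    intro w hw
    obtain ⟨h0, h1⟩ := hb w hw
    have l1 : m ≤ 1 := min_le_left _ _
    have l2 : m ≤ 1 + δ := min_le_right _ _
    nlinarith
  have hden_ub : ∀ w ∈ Ici (0:ℝ), 1 + δ * h w ≤ A := by
    intro w hw
    obtain ⟨h0, h1⟩ := hb w hw
    have l1 : (1:ℝ) ≤ A := le_max_left _ _
    have l2 : 1 + δ ≤ A := le_max_right _ _
    nlinarith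
  have hnum_ub : ∀ w ∈ Ici (0:ℝ), 1 + γ * h w ≤ B := by
    intro w hw
    obtain ⟨h0, h1⟩ := hb w hw
    have l1 : (1:ℝ) ≤ B := le_max_left _ _
    have l2 : 1 + γ ≤ B := le_max_right _ _
    nlinarith
  have hnum_lb : ∀ w ∈ Ici (0:ℝ), 0 ≤ 1 + γ * h w := by
    intro w hw
    obtain ⟨h0, h1⟩ := hb w hw
    nlinarith
  have hden_pos : ∀ w ∈ Ici (0:ℝ), 0 < 1 + δ * h w := fun w hw => lt_of_lt_of_le hm (hden_lb w hw)
  -- inner integrand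
  set f : ℝ → ℝ := fun z => 2*z*(1+γ*h z)/(1+δ*h z) with hf_def
  have hfcont : ContinuousOn f (Ici 0) := by
    apply ContinuousOn.div
    · exact ((continuous_const.mul continuous_id).continuousOn.mul
        (continuousOn_const.add (continuousOn_const.mul hcont)))
    · exact continuousOn_const.add (continuousOn_const.mul hcont)
    · exact fun z hz => ne_of_gt (hden_pos z hz)
  -- inner integral bound: ∫_0^w f ≤ c * w^2
  have hinner_le : ∀ w ∈ Ici (0:ℝ), (∫ z in (0:ℝ)..w, f z) ≤ c * w^2 := by
    intro w hw
    have hIcc : Set.Icc (0:ℝ) w ⊆ Ici 0 := fun z hz => hz.1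
    have hint1 : IntervalIntegrable f volume 0 w := by
      apply ContinuousOn.intervalIntegrable
      rw [uIcc_of_le hw]
      exact hfcont.mono hIcc
    have hint2 : IntervalIntegrable (fun z => 2 * c * z) volume 0 w :=
      (continuous_const.mul continuous_id).intervalIntegrable _ _
    have mono : (∫ z in (0:ℝ)..w, f z) ≤ ∫ z in (0:ℝ)..w, 2 * c * z := by
      apply intervalIntegral.integral_mono_on hw hint1 hint2
      intro z hz
      have hz0 : z ∈ Ici (0:ℝ) := hz.1
      rw [hf_def]
      have : 2*z*(1+γ*h z) ≤ 2*z*B := by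
        have := hnum_ub z hz0
        nlinarith [hz.1]
      calc 2*z*(1+γ*h z)/(1+δ*h z) ≤ (2*z*B)/m := by
            apply div_le_div₀ (by nlinarith [hz.1, hB.le]) this hm (hden_lb z hz0)
        _ = 2 * c * z := by rw [hc_def]; field_simp
    calc (∫ z in (0:ℝ)..w, f z) ≤ ∫ z in (0:ℝ)..w, 2 * c * z := mono
      _ = c * w^2 := by
          rw [intervalIntegral.integral_const_mul, integral_id]
          ring
  -- the outer integrand g
  set g : ℝ → ℝ := fun w => Real.exp (-(∫ z in (0:ℝ)..w, f z)) * (1/(1+δ*h w)) with hg_def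
  have hFg : ∀ x, Fint δ γ h x = ∫ w in (0:ℝ)..x, g w := fun x => rfl
  -- g continuous on Icc 0 x for each x ≥ 0
  have hgcont : ∀ x : ℝ, 0 ≤ x → ContinuousOn g (Icc 0 x) := by
    intro x hx
    have hIcc : Set.Icc (0:ℝ) x ⊆ Ici 0 := fun z hz => hz.1
    have hP : ContinuousOn (fun w => ∫ z in (0:ℝ)..w, f z) (Icc 0 x) := by
      have : IntegrableOn f (uIcc 0 x) volume := by
        rw [uIcc_of_le hx]
        exact (hfcont.mono hIcc).integrableOn_compact isCompact_Icc
      have := intervalIntegral.continuousOn_primitive_interval this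
      rwa [uIcc_of_le hx] at this
    apply ContinuousOn.mul
    · exact Real.continuous_exp.comp_continuousOn hP.neg
    · apply ContinuousOn.div continuousOn_const
        ((continuousOn_const.add (continuousOn_const.mul hcont)).mono hIcc)
      exact fun z hz => ne_of_gt (hden_pos z (hIcc hz))
  have hgint : ∀ x : ℝ, 0 ≤ x → IntervalIntegrable g volume 0 x := by
    intro x hx
    apply ContinuousOn.intervalIntegrable
    rw [uIcc_of_le hx]
    exact hgcont x hx
  have hgpos : ∀ w ∈ Ici (0:ℝ), 0 < g w := by
    intro w hw
    exact mul_pos (Real.exp_pos _) (by rw [one_div]; exact inv_pos.2 (hden_pos w hw))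
  -- F nonneg
  have hF0 : ∀ x ≥ (0:ℝ), 0 ≤ Fint δ γ h x := by
    intro x hx
    rw [hFg]
    apply intervalIntegral.integral_nonneg hx
    exact fun u hu => (hgpos u hu.1).le
  -- F monotone
  have hFmono : ∀ x y, 0 ≤ x → x ≤ y → Fint δ γ h x ≤ Fint δ γ h y := by
    intro x y hx hxy
    have hy : 0 ≤ y := le_trans hx hxy
    have i1 : IntervalIntegrable g volume 0 x := hgint x hx
    have i2 : IntervalIntegrable g volume x y := by
      apply ContinuousOn.intervalIntegrable
      rw [uIcc_of_le hxy]
      exact (hgcont y hy).mono (Icc_subset_Icc_left hx)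
    have : Fint δ γ h y = Fint δ γ h x + ∫ w in x..y, g w := by
      rw [hFg, hFg, intervalIntegral.integral_add_adjacent_intervals i1 i2]
    rw [this]
    have : 0 ≤ ∫ w in x..y, g w := by
      apply intervalIntegral.integral_nonneg hxy
      exact fun u hu => (hgpos u (le_trans hx hu.1)).le
    linarith
  have hFleL : ∀ x ≥ (0:ℝ), Fint δ γ h x ≤ L := by
    intro x hx
    apply ge_of_tendsto hL
    filter_upwards [eventually_ge_atTop x] with y hy
    exact hFmono x y hx hy
  refine ⟨fun x hx => ⟨hF0 x hx, hFleL x hx⟩, ?_⟩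
  -- lower bound for L
  have hGleF : ∀ x ≥ (0:ℝ),
      (∫ w in (0:ℝ)..x, Real.exp (-(c * w^2))) * (1/A) ≤ Fint δ γ h x := by
    intro x hx
    rw [hFg, ← intervalIntegral.integral_mul_const]
    have hIcc : Set.Icc (0:ℝ) x ⊆ Ici 0 := fun z hz => hz.1
    apply intervalIntegral.integral_mono_on hx
    · exact ((Real.continuous_exp.comp ((continuous_const.mul (continuous_pow 2)).neg)).mul
        continuous_const).intervalIntegrable _ _
    · exact hgint x hx
    · intro w hw
      have hw0 : w ∈ Ici (0:ℝ) := hw.1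
      have e1 : Real.exp (-(c * w^2)) ≤ Real.exp (-(∫ z in (0:ℝ)..w, f z)) := by
        apply Real.exp_le_exp.2
        exact neg_le_neg (hinner_le w hw0)
      have e2 : (1:ℝ)/A ≤ 1/(1+δ*h w) :=
        one_div_le_one_div_of_le (hden_pos w hw0) (hden_ub w hw0)
      have := mul_le_mul e1 e2 (by positivity) (Real.exp_pos _).le
      exact this
  -- tendsto of the Gaussian lower bound
  have hGauss : Tendsto (fun x => (∫ w in (0:ℝ)..x, Real.exp (-(c * w^2))) * (1/A)) atTop
      (nhds ((Real.sqrt (π / c) / 2) * (1/A))) := by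
    apply Tendsto.mul_const
    have hint : IntegrableOn (fun w => Real.exp (-(c * w^2))) (Ioi 0) volume := by
      have := (integrable_exp_neg_mul_sq hc).integrableOn (s := Ioi 0)
      simpa [neg_mul] using this
    have := MeasureTheory.intervalIntegral_tendsto_integral_Ioi 0 hint tendsto_id
    have heq : (∫ w in Ioi (0:ℝ), Real.exp (-(c * w^2))) = Real.sqrt (π / c) / 2 := by
      rw [← integral_gaussian_Ioi c]
      congr 1
      ext w
      rw [neg_mul]
    rwa [heq] at this
  have hLlb : (Real.sqrt (π / c) / 2) * (1/A) ≤ L := by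
    apply le_of_tendsto_of_tendsto hGauss hL
    filter_upwards [eventually_ge_atTop (0:ℝ)] with x hx
    exact hGleF x hx
  -- (M2 δ γ)⁻¹ = that value
  have hM2inv : (M2 δ γ)⁻¹ = (Real.sqrt (π / c) / 2) * (1/A) := by
    rw [M2, hc_def]
    rw [show π / (B / m) = π * m / B by field_simp,
      Real.sqrt_div (by positivity) B, Real.sqrt_mul Real.pi_pos.le,
      ← Real.sqrt_eq_rpow, ← Real.sqrt_eq_rpow]
    have s1 : 0 < Real.sqrt π := Real.sqrt_pos.2 Real.pi_pos
    have s2 : 0 < Real.sqrt m := Real.sqrt_pos.2 hm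
    have s3 : 0 < Real.sqrt B := Real.sqrt_pos.2 hB
    rw [hA_def] at hA
    rw [hB_def, hm_def] at *
    rw [hA_def]
    field_simp
  rw [hM2inv]
  exact hLlb



lemma M2_pos (δ γ : ℝ) (hδ : -1 < δ) (hγ : -1 < γ) : 0 < M2 δ γ := by
  rw [M2]
  have h1 : (0:ℝ) < max 1 (1+δ) := lt_of_lt_of_le one_pos (le_max_left _ _)
  have h2 : (0:ℝ) < max 1 (1+γ) := lt_of_lt_of_le one_pos (le_max_left _ _)
  have h3 : (0:ℝ) < min 1 (1+δ) := lt_min one_pos (by linarith)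
  have h4 : (0:ℝ) < Real.sqrt π := Real.sqrt_pos.2 Real.pi_pos
  positivity

theorem T_diff_estimate (δ γ : ℝ) (hδ : -1 < δ) (hγ : -1 < γ)
    (h₁ h₂ : ℝ → ℝ)
    (hcont₁ : ContinuousOn h₁ (Set.Ici 0)) (hcont₂ : ContinuousOn h₂ (Set.Ici 0))
    (hb₁ : ∀ x ≥ (0:ℝ), 0 ≤ h₁ x ∧ h₁ x ≤ 1)
    (hb₂ : ∀ x ≥ (0:ℝ), 0 ≤ h₂ x ∧ h₂ x ≤ 1)
    (L₁ L₂ : ℝ) (hL₁ : Tendsto (Fint δ γ h₁) atTop (nhds L₁))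
    (hL₂ : Tendsto (Fint δ γ h₂) atTop (nhds L₂)) :
    ∀ x ≥ (0:ℝ),
      |Fint δ γ h₁ x / L₁ - Fint δ γ h₂ x / L₂| ≤
        M2 δ γ * (|Fint δ γ h₁ x - Fint δ γ h₂ x| + |L₁ - L₂|) := by
  intro x hx
  obtain ⟨hF1, hL1lb⟩ := Fint_props δ γ hδ hγ h₁ hcont₁ hb₁ L₁ hL₁
  obtain ⟨hF2, hL2lb⟩ := Fint_props δ γ hδ hγ h₂ hcont₂ hb₂ L₂ hL₂
  have hM2 : 0 < M2 δ γ := M2_pos δ γ hδ hγ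
  set M := M2 δ γ with hM_def
  have hMinv : 0 < M⁻¹ := inv_pos.2 hM2
  have hL1pos : 0 < L₁ := lt_of_lt_of_le hMinv hL1lb
  have hL2pos : 0 < L₂ := lt_of_lt_of_le hMinv hL2lb
  obtain ⟨ha0, haL⟩ := hF1 x hx
  obtain ⟨hb0, hbL⟩ := hF2 x hx
  set a := Fint δ γ h₁ x
  set b := Fint δ γ h₂ x
  have hinv1 : L₁⁻¹ ≤ M := by
    rw [← inv_inv M]
    exact inv_anti₀ hMinv hL1lb
  have key : a/L₁ - b/L₂ = (a-b)/L₁ + (b/L₂)*((L₂-L₁)/L₁) := by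
    field_simp
    ring
  have h1 : |a-b|/L₁ ≤ M*|a-b| := by
    rw [div_eq_mul_inv, mul_comm M]
    exact mul_le_mul_of_nonneg_left hinv1 (abs_nonneg _)
  have h2 : (b/L₂)*(|L₂-L₁|/L₁) ≤ 1*(M*|L₁-L₂|) := by
    apply mul_le_mul
    · exact (div_le_one hL2pos).2 hbL
    · rw [abs_sub_comm, div_eq_mul_inv, mul_comm M]
      exact mul_le_mul_of_nonneg_left hinv1 (abs_nonneg _)
    · positivity
    · norm_num
  calc |a/L₁ - b/L₂| ≤ |(a-b)/L₁| + |(b/L₂)*((L₂-L₁)/L₁)| := by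
        rw [key]; exact abs_add_le _ _
    _ = |a-b|/L₁ + (b/L₂)*(|L₂-L₁|/L₁) := by
        rw [abs_div, abs_mul, abs_div, abs_of_pos hL1pos, abs_of_pos hL2pos,
          abs_of_nonneg hb0, abs_div, abs_of_pos hL1pos]
    _ ≤ M*|a-b| + 1*(M*|L₁-L₂|) := add_le_add h1 h2
    _ = M * (|a-b| + |L₁-L₂|) := by ring
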